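/- Let (V; M0,...,M4; c) be a Higmanian matrix configuration with valencies ni = c(i,i,0). Set (as rational numbers) α = n1+1, β = n2/(n1+1), γ = n3(n1+1)/(n3+n4), δ = (n3+n4)/(n1+1), ε = δ−β−1, and τ = c(4,3,4). Then the following four conditions are pairwise equivalent: (i) c(3,3,3) = c(3,3,4); (ii) c(4,3,3) = c(4,3,4); (iii) c(4,4,3) = c(4,4,4); (iv) τ = εγ(α−γ)/α. -/
import Mathlib


open Matrix Finset

/-- A *Higmanian matrix configuration* on a nonempty finite set `V`:
five nonzero symmetric `{0,1}`-matrices `M 0, …, M 4` over `ℤ` summing to the all-ones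
matrix, with `M 0 = I`, structure constants `c`, parabolic conditions for
`N0 = M0 + M1` and `N1 = M0 + M1 + M2`, standard ordering `n3 ≤ n4`, and triviality of
the radicals of `M 3` and `M 4`. -/
structure HigmanianConfig (V : Type*) [Fintype V] [DecidableEq V] : Type _ where
  nonempty : Nonempty V
  M : Fin 5 → Matrix V V ℤ
  c : Fin 5 → Fin 5 → Fin 5 → ℕ
  M_ne_zero : ∀ i, M i ≠ 0
  M_symm : ∀ i, (M i)ᵀ = M i
  M_entries : ∀ i x y, M i x y = 0 ∨ M i x y = 1
  M_zero : M 0 = 1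
  sum_M : M 0 + M 1 + M 2 + M 3 + M 4 = Matrix.of fun _ _ => 1
  mul_M : ∀ i j, M i * M j = ∑ k : Fin 5, (c i j k : ℤ) • M k
  N0_sq : (M 0 + M 1) * (M 0 + M 1) = ((1 + c 1 1 0 : ℕ) : ℤ) • (M 0 + M 1)
  N1_sq : (M 0 + M 1 + M 2) * (M 0 + M 1 + M 2)
      = ((1 + c 1 1 0 + c 2 2 0 : ℕ) : ℤ) • (M 0 + M 1 + M 2)
  N1_ne_J : M 0 + M 1 + M 2 ≠ Matrix.of fun _ _ => 1
  n3_le_n4 : c 3 3 0 ≤ c 4 4 0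
  radical : ∀ j ∈ ({3, 4} : Finset (Fin 5)), ∀ T : Finset (Fin 5),
    T.Nonempty → T ⊆ ({1, 2, 3, 4} : Finset (Fin 5)) →
    ¬ ((1 + ∑ t ∈ T, M t) * (1 + ∑ t ∈ T, M t)
          = (1 + ∑ t ∈ T, (c t t 0 : ℤ)) • (1 + ∑ t ∈ T, M t)
        ∧ (1 + ∑ t ∈ T, M t) * M j = (1 + ∑ t ∈ T, (c t t 0 : ℤ)) • M j)

/-- The valency `nᵢ = c i i 0` of the `i`-th basis matrix. -/
def HigmanianConfig.n {V : Type*} [Fintype V] [DecidableEq V]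
    (X : HigmanianConfig V) (i : Fin 5) : ℕ := X.c i i 0

namespace HigmanianConfig

variable {V : Type*} [Fintype V] [DecidableEq V] (X : HigmanianConfig V)

lemma entry_nonneg (i : Fin 5) (x y : V) : 0 ≤ X.M i x y := by
  rcases X.M_entries i x y with h | h <;> simp [h]

lemma entry_sum (x y : V) : ∑ i : Fin 5, X.M i x y = 1 := by
  have := congrFun (congrFun X.sum_M x) y
  simpa [Fin.sum_univ_five] using this

lemma eq_zero_of_ne {k : Fin 5} {x y : V} (hk : X.M k x y = 1) {i : Fin 5}
    (hik : i ≠ k) : X.M i x y = 0 := by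
  have h1 := X.entry_sum x y
  rw [← Finset.add_sum_erase _ _ (Finset.mem_univ k), hk] at h1
  have h2 : ∑ j ∈ Finset.univ.erase k, X.M j x y = 0 := by linarith
  have := (Finset.sum_eq_zero_iff_of_nonneg (fun j _ => X.entry_nonneg j x y)).1 h2
  exact this i (Finset.mem_erase.2 ⟨hik, Finset.mem_univ i⟩)

lemma entry_of {k : Fin 5} {x y : V} (hk : X.M k x y = 1) (i : Fin 5) :
    X.M i x y = if i = k then 1 else 0 := by
  split
  · subst ‹i = k›; exact hk
  · exact X.eq_zero_of_ne hk ‹i ≠ k›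

lemma exists_one (i : Fin 5) : ∃ x y, X.M i x y = 1 := by
  by_contra h
  push_neg at h
  apply X.M_ne_zero i
  ext x y
  rcases X.M_entries i x y with h0 | h1
  · simpa using h0
  · exact absurd h1 (h x y)

lemma diag_one (x : V) : X.M 0 x x = 1 := by
  rw [X.M_zero]; simp [Matrix.one_apply]

lemma diag_zero {k : Fin 5} (hk : k ≠ 0) (x : V) : X.M k x x = 0 :=
  X.eq_zero_of_ne (X.diag_one x) hk

lemma symm_entry (i : Fin 5) (x y : V) : X.M i y x = X.M i x y := by
  conv_lhs => rw [← X.M_symm i]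
  rfl

lemma row_sum (i : Fin 5) (x : V) : ∑ z, X.M i x z = (X.n i : ℤ) := by
  have h := congrFun (congrFun (X.mul_M i i) x) x
  rw [Matrix.mul_apply] at h
  have hL : ∑ z, X.M i x z * X.M i z x = ∑ z, X.M i x z := by
    apply Finset.sum_congr rfl
    intro z _
    rw [X.symm_entry i x z]
    rcases X.M_entries i x z with h | h <;> simp [h]
  have hR : (∑ k : Fin 5, (X.c i i k : ℤ) • X.M k) x x = (X.n i : ℤ) := by
    rw [Matrix.sum_apply]
    rw [Finset.sum_eq_single 0]
    · simp [X.diag_one, HigmanianConfig.n]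
    · intro k _ hk
      simp [X.diag_zero hk]
    · simp
  rw [hL] at h
  rw [h, hR]

lemma n_pos (i : Fin 5) : 1 ≤ (X.n i : ℤ) := by
  obtain ⟨x, y, hxy⟩ := X.exists_one i
  rw [← X.row_sum i x]
  calc (1 : ℤ) = X.M i x y := hxy.symm
  _ ≤ ∑ z, X.M i x z := Finset.single_le_sum (fun z _ => X.entry_nonneg i x z) (Finset.mem_univ y)

end HigmanianConfig

namespace HigmanianConfig
variable {V : Type*} [Fintype V] [DecidableEq V] (X : HigmanianConfig V)

lemma eval_combo (a : Fin 5 → ℤ) {k : Fin 5} {x y : V} (hk : X.M k x y = 1) :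
    (∑ i : Fin 5, a i • X.M i) x y = a k := by
  rw [Matrix.sum_apply]
  rw [Finset.sum_eq_single k]
  · simp [hk]
  · intro i _ hik
    simp [X.eq_zero_of_ne hk hik]
  · simp

lemma coeff_eq {a b : Fin 5 → ℤ}
    (h : ∑ i : Fin 5, a i • X.M i = ∑ i : Fin 5, b i • X.M i) (k : Fin 5) :
    a k = b k := by
  obtain ⟨x, y, hk⟩ := X.exists_one k
  have := congrFun (congrFun h x) y
  rwa [X.eval_combo a hk, X.eval_combo b hk] at this

lemma mul_M_comm (i j : Fin 5) : X.M i * X.M j = X.M j * X.M i := by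
  have h2 : (X.M i * X.M j)ᵀ = X.M i * X.M j := by
    rw [X.mul_M i j, Matrix.transpose_sum]
    exact Finset.sum_congr rfl fun k _ => by rw [Matrix.transpose_smul, X.M_symm]
  rw [← h2, Matrix.transpose_mul, X.M_symm, X.M_symm]

lemma c_comm (i j k : Fin 5) : X.c i j k = X.c j i k := by
  have h := X.coeff_eq (a := fun k => (X.c i j k : ℤ)) (b := fun k => (X.c j i k : ℤ))
    (by rw [← X.mul_M i j, ← X.mul_M j i, X.mul_M_comm]) k
  exact_mod_cast h

lemma c_zero_left (j k : Fin 5) : (X.c 0 j k : ℤ) = if k = j then 1 else 0 := by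
  have hM : X.M 0 * X.M j = ∑ i : Fin 5, (if i = j then (1:ℤ) else 0) • X.M i := by
    rw [X.M_zero, one_mul]
    simp
  exact X.coeff_eq (a := fun k => (X.c 0 j k : ℤ)) (b := fun k => if k = j then 1 else 0)
    (by rw [← X.mul_M 0 j, hM]) k

lemma trace_pair (l k : Fin 5) :
    Matrix.trace (X.M l * X.M k) = if l = k then (Fintype.card V : ℤ) * X.n k else 0 := by
  rcases eq_or_ne l k with rfl | hlk
  · have h : ∀ x, (X.M l * X.M l) x x = (X.n l : ℤ) := by
      intro x
      rw [Matrix.mul_apply]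
      rw [show ∑ z, X.M l x z * X.M l z x = ∑ z, X.M l x z from
        Finset.sum_congr rfl fun z _ => by
          rw [X.symm_entry l x z]
          rcases X.M_entries l x z with h | h <;> simp [h]]
      exact X.row_sum l x
    simp [Matrix.trace, h, mul_comm]
  · have h : ∀ x, (X.M l * X.M k) x x = 0 := by
      intro x
      rw [Matrix.mul_apply]
      apply Finset.sum_eq_zero
      intro z _
      rcases X.M_entries l x z with h | h
      · simp [h]
      · rw [X.symm_entry k x z, X.eq_zero_of_ne h (Ne.symm hlk), mul_zero]
    simp [Matrix.trace, h, hlk]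

lemma trace_triple (i j k : Fin 5) :
    Matrix.trace (X.M i * X.M j * X.M k)
      = (X.c i j k : ℤ) * ((Fintype.card V : ℤ) * X.n k) := by
  rw [X.mul_M i j, Matrix.sum_mul]
  rw [Matrix.trace_sum]
  rw [Finset.sum_eq_single k]
  · rw [Matrix.smul_mul, Matrix.trace_smul, X.trace_pair]
    simp
  · intro l _ hlk
    rw [Matrix.smul_mul, Matrix.trace_smul, X.trace_pair]
    simp [hlk]
  · simp

lemma triangle (i j k : Fin 5) :
    (X.c i j k : ℤ) * X.n k = (X.c k i j : ℤ) * X.n j := by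
  have e1 := X.trace_triple i j k
  have e2 := X.trace_triple k i j
  have e3 : Matrix.trace (X.M i * X.M j * X.M k) = Matrix.trace (X.M k * X.M i * X.M j) := by
    rw [Matrix.trace_mul_comm, mul_assoc]
  have hcard : (0:ℤ) < (Fintype.card V : ℤ) := by
    have := X.nonempty
    exact_mod_cast Fintype.card_pos
  rw [e1, e2] at e3
  refine mul_left_cancel₀ (ne_of_gt hcard) ?_
  linear_combination e3

lemma sum_c (i k : Fin 5) : ∑ j : Fin 5, (X.c i j k : ℤ) = (X.n i : ℤ) := by
  have key : X.M i * (∑ l : Fin 5, X.M l) = ∑ l : Fin 5, (X.n i : ℤ) • X.M l := by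
    ext x y
    rw [Matrix.mul_apply, Matrix.sum_apply]
    have h1 : ∀ z, (∑ l : Fin 5, X.M l) z y = 1 := by
      intro z; rw [Matrix.sum_apply]; exact X.entry_sum z y
    calc ∑ z, X.M i x z * (∑ l : Fin 5, X.M l) z y
        = ∑ z, X.M i x z := Finset.sum_congr rfl fun z _ => by rw [Matrix.sum_apply, X.entry_sum, mul_one]
      _ = (X.n i : ℤ) := X.row_sum i x
      _ = ∑ l : Fin 5, ((X.n i : ℤ) • X.M l) x y := by
          rw [show ∑ l : Fin 5, ((X.n i : ℤ) • X.M l) x y = (X.n i : ℤ) * ∑ l : Fin 5, X.M l x y by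
            rw [Finset.mul_sum]; exact Finset.sum_congr rfl fun l _ => rfl]
          rw [X.entry_sum, mul_one]
  have lhs : X.M i * (∑ l : Fin 5, X.M l) = ∑ k : Fin 5, (∑ j : Fin 5, (X.c i j k : ℤ)) • X.M k := by
    rw [Matrix.mul_sum]
    simp_rw [X.mul_M]
    rw [Finset.sum_comm]
    exact Finset.sum_congr rfl fun k _ => (Finset.sum_smul).symm
  exact X.coeff_eq (a := fun k => ∑ j : Fin 5, (X.c i j k : ℤ)) (b := fun _ => (X.n i : ℤ))
    (by rw [← lhs, key]) k

end HigmanianConfig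

namespace HigmanianConfig
variable {V : Type*} [Fintype V] [DecidableEq V] (X : HigmanianConfig V)

lemma N1_zeros (k : Fin 5) (hk : k = 3 ∨ k = 4) :
    X.c 1 1 k = 0 ∧ X.c 1 2 k = 0 ∧ X.c 2 1 k = 0 ∧ X.c 2 2 k = 0 := by
  obtain ⟨u, v, huv⟩ := X.exists_one k
  have hne : u ≠ v := by
    intro hz
    have h0 : X.M k v v = 0 := X.diag_zero (by rcases hk with rfl | rfl <;> decide) v
    rw [hz] at huv
    rw [huv] at h0
    exact one_ne_zero h0
  have h := X.N1_sq
  rw [X.M_zero] at h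
  have hexp : ((1 : Matrix V V ℤ) + X.M 1 + X.M 2) * (1 + X.M 1 + X.M 2)
      = 1 + X.M 1 + X.M 2 + X.M 1 + X.M 1 * X.M 1 + X.M 1 * X.M 2
        + X.M 2 + X.M 2 * X.M 1 + X.M 2 * X.M 2 := by noncomm_ring
  rw [hexp, X.mul_M 1 1, X.mul_M 1 2, X.mul_M 2 1, X.mul_M 2 2] at h
  have he := congrFun (congrFun h u) v
  rcases hk with rfl | rfl <;>
  · simp only [Matrix.add_apply, Matrix.smul_apply, Matrix.sum_apply, Matrix.one_apply,
      if_neg hne, X.entry_of huv, smul_eq_mul] at he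
    simp [Fin.sum_univ_five] at he
    refine ⟨?_, ?_, ?_, ?_⟩ <;> omega

lemma c_small (i j k : Fin 5) (hi : i = 1 ∨ i = 2) (hj : j = 3 ∨ j = 4)
    (hk : k = 0 ∨ k = 1 ∨ k = 2) : X.c i j k = 0 := by
  have hmid : X.c k i j = 0 := by
    rcases hk with rfl | rfl | rfl
    · have := X.c_zero_left i j
      have hne : j ≠ i := by rcases hi with rfl | rfl <;> rcases hj with rfl | rfl <;> decide
      rw [if_neg hne] at this
      exact_mod_cast this
    · rcases hi with rfl | rfl
      · exact (X.N1_zeros j hj).1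
      · exact (X.N1_zeros j hj).2.1
    · rcases hi with rfl | rfl
      · exact (X.N1_zeros j hj).2.2.1
      · exact (X.N1_zeros j hj).2.2.2
  have ht := X.triangle i j k
  rw [hmid] at ht
  simp only [Nat.cast_zero, zero_mul] at ht
  rcases mul_eq_zero.1 ht with h | h
  · exact_mod_cast h
  · exact absurd h (by have := X.n_pos k; intro hh; rw [hh] at this; norm_num at this)

end HigmanianConfig

namespace HigmanianConfig
variable {V : Type*} [Fintype V] [DecidableEq V] (X : HigmanianConfig V)

lemma N1_mul_M3 :
    (X.M 0 + X.M 1 + X.M 2) * X.M 3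
      = ((1 : ℤ) + X.c 1 3 3 + X.c 2 3 3) • X.M 3 + ((X.c 1 3 4 : ℤ) + X.c 2 3 4) • X.M 4 := by
  rw [add_mul, add_mul, X.M_zero, one_mul, X.mul_M 1 3, X.mul_M 2 3]
  simp only [Fin.sum_univ_five]
  rw [X.c_small 1 3 0 (by decide) (by decide) (by decide),
      X.c_small 1 3 1 (by decide) (by decide) (by decide),
      X.c_small 1 3 2 (by decide) (by decide) (by decide),
      X.c_small 2 3 0 (by decide) (by decide) (by decide),
      X.c_small 2 3 1 (by decide) (by decide) (by decide),
      X.c_small 2 3 2 (by decide) (by decide) (by decide)]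
  simp only [Fin.sum_univ_five, Nat.cast_zero, zero_smul, zero_add, add_zero]
  module

lemma N1_mul_M4 :
    (X.M 0 + X.M 1 + X.M 2) * X.M 4
      = ((X.c 1 4 3 : ℤ) + X.c 2 4 3) • X.M 3 + ((1 : ℤ) + X.c 1 4 4 + X.c 2 4 4) • X.M 4 := by
  rw [add_mul, add_mul, X.M_zero, one_mul, X.mul_M 1 4, X.mul_M 2 4]
  simp only [Fin.sum_univ_five]
  rw [X.c_small 1 4 0 (by decide) (by decide) (by decide),
      X.c_small 1 4 1 (by decide) (by decide) (by decide),
      X.c_small 1 4 2 (by decide) (by decide) (by decide),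
      X.c_small 2 4 0 (by decide) (by decide) (by decide),
      X.c_small 2 4 1 (by decide) (by decide) (by decide),
      X.c_small 2 4 2 (by decide) (by decide) (by decide)]
  simp only [Fin.sum_univ_five, Nat.cast_zero, zero_smul, zero_add, add_zero]
  module

lemma J_entry (x y : V) : (X.M 0 + X.M 1 + X.M 2 + X.M 3 + X.M 4) x y = 1 := by
  have := X.entry_sum x y
  rw [Fin.sum_univ_five] at this
  simpa [Matrix.add_apply] using this

lemma mul_J (i : Fin 5) :
    X.M i * (X.M 0 + X.M 1 + X.M 2 + X.M 3 + X.M 4)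
      = (X.n i : ℤ) • (X.M 0 + X.M 1 + X.M 2 + X.M 3 + X.M 4) := by
  ext x y
  rw [Matrix.mul_apply, Matrix.smul_apply, X.J_entry x y, smul_eq_mul, mul_one]
  calc ∑ z, X.M i x z * (X.M 0 + X.M 1 + X.M 2 + X.M 3 + X.M 4) z y
      = ∑ z, X.M i x z := Finset.sum_congr rfl fun z _ => by rw [X.J_entry z y, mul_one]
    _ = (X.n i : ℤ) := X.row_sum i x

lemma n_zero : (X.n 0 : ℤ) = 1 := by
  have := X.c_zero_left 0 0
  simpa [HigmanianConfig.n] using this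

lemma N1_mul_J :
    (X.M 0 + X.M 1 + X.M 2) * (X.M 0 + X.M 1 + X.M 2 + X.M 3 + X.M 4)
      = ((1 : ℤ) + X.n 1 + X.n 2) • (X.M 0 + X.M 1 + X.M 2 + X.M 3 + X.M 4) := by
  rw [add_mul, add_mul, X.mul_J 0, X.mul_J 1, X.mul_J 2, X.n_zero]
  module

lemma N1_sq' :
    (X.M 0 + X.M 1 + X.M 2) * (X.M 0 + X.M 1 + X.M 2)
      = ((1 : ℤ) + X.n 1 + X.n 2) • (X.M 0 + X.M 1 + X.M 2) := by
  have := X.N1_sq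
  rwa [show ((1 + X.c 1 1 0 + X.c 2 2 0 : ℕ) : ℤ) = (1 : ℤ) + X.n 1 + X.n 2 by
    unfold HigmanianConfig.n; push_cast; ring] at this

lemma pair_eq {a b a' b' : ℤ}
    (h : a • X.M 3 + b • X.M 4 = a' • X.M 3 + b' • X.M 4) : a = a' ∧ b = b' := by
  obtain ⟨u, v, hu⟩ := X.exists_one 3
  obtain ⟨p, q, hp⟩ := X.exists_one 4
  have h1 := congrFun (congrFun h u) v
  have h2 := congrFun (congrFun h p) q
  have e1 : X.M 4 u v = 0 := X.eq_zero_of_ne hu (by decide)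
  have e2 : X.M 3 p q = 0 := X.eq_zero_of_ne hp (by decide)
  constructor
  · simpa only [Matrix.add_apply, Matrix.smul_apply, smul_eq_mul, hu, e1, mul_one, mul_zero,
      add_zero] using h1
  · simpa only [Matrix.add_apply, Matrix.smul_apply, smul_eq_mul, hp, e2, mul_one, mul_zero,
      zero_add] using h2

end HigmanianConfig

namespace HigmanianConfig
variable {V : Type*} [Fintype V] [DecidableEq V] (X : HigmanianConfig V)

lemma xy_facts :
    ((1:ℤ) + X.c 1 3 3 + X.c 2 3 3) = (X.c 1 3 4 : ℤ) + X.c 2 3 4 ∧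
    ((X.c 1 4 3 : ℤ) + X.c 2 4 3) = (1:ℤ) + X.c 1 4 4 + X.c 2 4 4 ∧
    ((1:ℤ) + X.c 1 3 3 + X.c 2 3 3) * ((X.n 3 : ℤ) + X.n 4)
      = ((1:ℤ) + X.n 1 + X.n 2) * X.n 3 := by
  set x : ℤ := (1:ℤ) + X.c 1 3 3 + X.c 2 3 3 with hxd
  set y : ℤ := (X.c 1 3 4 : ℤ) + X.c 2 3 4 with hyd
  set x' : ℤ := (X.c 1 4 3 : ℤ) + X.c 2 4 3 with hxd'
  set y' : ℤ := (1:ℤ) + X.c 1 4 4 + X.c 2 4 4 with hyd'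
  set s : ℤ := (1:ℤ) + X.n 1 + X.n 2 with hsd
  have h3 : (X.M 0 + X.M 1 + X.M 2) * X.M 3 = x • X.M 3 + y • X.M 4 := X.N1_mul_M3
  have h4 : (X.M 0 + X.M 1 + X.M 2) * X.M 4 = x' • X.M 3 + y' • X.M 4 := X.N1_mul_M4
  have hsq : (X.M 0 + X.M 1 + X.M 2) * (X.M 0 + X.M 1 + X.M 2)
      = s • (X.M 0 + X.M 1 + X.M 2) := X.N1_sq'
  have hJ := X.N1_mul_J
  have hsum : x + x' = s ∧ y + y' = s := by
    apply X.pair_eq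
    have e1 : (X.M 0 + X.M 1 + X.M 2) * (X.M 3 + X.M 4)
        = (x + x') • X.M 3 + (y + y') • X.M 4 := by
      rw [mul_add, h3, h4]; module
    have e2 : (X.M 0 + X.M 1 + X.M 2) * (X.M 3 + X.M 4)
        = s • X.M 3 + s • X.M 4 := by
      have expand : (X.M 0 + X.M 1 + X.M 2) * (X.M 3 + X.M 4)
          = (X.M 0 + X.M 1 + X.M 2) * (X.M 0 + X.M 1 + X.M 2 + X.M 3 + X.M 4)
            - (X.M 0 + X.M 1 + X.M 2) * (X.M 0 + X.M 1 + X.M 2) := by noncomm_ring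
      rw [expand, hJ, hsq]; module
    rw [← e1, e2]
  have hassoc : x * x + y * x' = s * x ∧ x * y + y * y' = s * y := by
    apply X.pair_eq
    have e1 : (X.M 0 + X.M 1 + X.M 2) * ((X.M 0 + X.M 1 + X.M 2) * X.M 3)
        = (x * x + y * x') • X.M 3 + (x * y + y * y') • X.M 4 := by
      rw [h3, mul_add, mul_smul_comm, mul_smul_comm, h3, h4]; module
    have e2 : (X.M 0 + X.M 1 + X.M 2) * ((X.M 0 + X.M 1 + X.M 2) * X.M 3)
        = (s * x) • X.M 3 + (s * y) • X.M 4 := by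
      rw [← mul_assoc, hsq, smul_mul_assoc, h3]; module
    rw [← e1, e2]
  have h9 : x * X.n 3 + y * X.n 4 = s * X.n 3 := by
    have e1 : ((X.M 0 + X.M 1 + X.M 2) * X.M 3) * (X.M 0 + X.M 1 + X.M 2 + X.M 3 + X.M 4)
        = (x * X.n 3 + y * X.n 4) • (X.M 0 + X.M 1 + X.M 2 + X.M 3 + X.M 4) := by
      rw [h3, add_mul, smul_mul_assoc, smul_mul_assoc, X.mul_J 3, X.mul_J 4]; module
    have e2 : (X.M 0 + X.M 1 + X.M 2) * (X.M 3 * (X.M 0 + X.M 1 + X.M 2 + X.M 3 + X.M 4))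
        = (s * X.n 3) • (X.M 0 + X.M 1 + X.M 2 + X.M 3 + X.M 4) := by
      rw [X.mul_J 3, mul_smul_comm, hJ]; module
    rw [← mul_assoc] at e2
    rw [e1] at e2
    obtain ⟨u⟩ := X.nonempty
    have := congrFun (congrFun e2 u) u
    simpa only [Matrix.smul_apply, X.J_entry, smul_eq_mul, mul_one] using this
  have hx' : x' = s - x := by linarith [hsum.1]
  have hy' : y' = s - y := by linarith [hsum.2]
  have hkey : (x - y) * (x - s) = 0 := by
    have h := hassoc.1
    rw [hx'] at h
    linear_combination h
  have hn4 := X.n_pos 4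
  have hxy : x = y := by
    rcases mul_eq_zero.1 hkey with h | h
    · linarith
    · exfalso
      have hxs : x = s := by linarith
      have hy0 : y = 0 := by
        have hyn : y * (X.n 4 : ℤ) = 0 := by rw [hxs] at h9; linarith
        rcases mul_eq_zero.1 hyn with h' | h'
        · exact h'
        · exfalso; rw [h'] at hn4; norm_num at hn4
      have hM3 : (X.M 0 + X.M 1 + X.M 2) * X.M 3 = s • X.M 3 := by
        rw [h3, hxs, hy0]; module
      have hT : (∑ t ∈ ({1, 2} : Finset (Fin 5)), X.M t) = X.M 1 + X.M 2 := by
        rw [Finset.sum_insert (by decide), Finset.sum_singleton]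
      have hc : (1 + ∑ t ∈ ({1, 2} : Finset (Fin 5)), (X.c t t 0 : ℤ)) = s := by
        rw [Finset.sum_insert (by decide), Finset.sum_singleton, hsd]
        unfold HigmanianConfig.n
        ring
      have hE : (1 : Matrix V V ℤ) + ∑ t ∈ ({1, 2} : Finset (Fin 5)), X.M t
          = X.M 0 + X.M 1 + X.M 2 := by
        rw [hT, ← X.M_zero, add_assoc]
      exact X.radical 3 (by decide) {1, 2} ⟨1, by decide⟩ (by decide)
        ⟨by rw [hE, hc]; exact hsq, by rw [hE, hc]; exact hM3⟩
  refine ⟨hxy, by linarith, ?_⟩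
  linear_combination h9 + (X.n 4 : ℤ) * hxy

end HigmanianConfig


/-- for a Higmanian configuration, the conditions
`c(3,3,3)=c(3,3,4)`, `c(4,3,3)=c(4,3,4)`, `c(4,4,3)=c(4,4,4)` and
`τ = εγ(α−γ)/α` are pairwise equivalent. -/
theorem higmanian_tau_equiv {V : Type*} [Fintype V] [DecidableEq V]
    (X : HigmanianConfig V) (α β γ δ ε τ : ℚ)
    (hα : α = (X.n 1 : ℚ) + 1)
    (hβ : β = (X.n 2 : ℚ) / ((X.n 1 : ℚ) + 1))
    (hγ : γ = (X.n 3 : ℚ) * ((X.n 1 : ℚ) + 1) / ((X.n 3 : ℚ) + (X.n 4 : ℚ)))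
    (hδ : δ = ((X.n 3 : ℚ) + (X.n 4 : ℚ)) / ((X.n 1 : ℚ) + 1))
    (hε : ε = δ - β - 1)
    (hτ : τ = (X.c 4 3 4 : ℚ)) :
    (X.c 3 3 3 = X.c 3 3 4 ↔ X.c 4 3 3 = X.c 4 3 4) ∧
    (X.c 3 3 3 = X.c 3 3 4 ↔ X.c 4 4 3 = X.c 4 4 4) ∧
    (X.c 3 3 3 = X.c 3 3 4 ↔ τ = ε * γ * (α - γ) / α) := by
  obtain ⟨hxy, hx'y', h5⟩ := X.xy_facts
  have e1 := X.sum_c 3 3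
  rw [Fin.sum_univ_five, X.c_comm 3 0, X.c_comm 3 1, X.c_comm 3 2, X.c_comm 3 4,
    X.c_zero_left] at e1
  norm_num at e1
  have e2 := X.sum_c 3 4
  rw [Fin.sum_univ_five, X.c_comm 3 0, X.c_comm 3 1, X.c_comm 3 2, X.c_comm 3 4,
    X.c_zero_left] at e2
  rw [if_neg (by decide : ¬((4:Fin 5) = 3))] at e2
  norm_num at e2
  have e3 := X.sum_c 4 3
  rw [Fin.sum_univ_five, X.c_comm 4 0, X.c_comm 4 1, X.c_comm 4 2, X.c_zero_left] at e3
  rw [if_neg (by decide : ¬((3:Fin 5) = 4))] at e3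
  norm_num at e3
  have e4 := X.sum_c 4 4
  rw [Fin.sum_univ_five, X.c_comm 4 0, X.c_comm 4 1, X.c_comm 4 2, X.c_zero_left] at e4
  norm_num at e4
  have e7 := X.triangle 3 3 4
  have e8 := X.triangle 4 3 4
  have hn3 := X.n_pos 3
  have hn4 := X.n_pos 4
  -- key linear relations
  have key1 : (X.c 3 3 3 : ℤ) + X.c 4 3 3 = (X.c 3 3 4 : ℤ) + X.c 4 3 4 := by
    linarith [e1, e2, hxy]
  have key2 : (X.c 4 3 3 : ℤ) + X.c 4 4 3 = (X.c 4 3 4 : ℤ) + X.c 4 4 4 := by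
    linarith [e3, e4, hx'y']
  have A2 : ((1:ℤ) + X.c 1 3 3 + X.c 2 3 3) + X.c 3 3 4 + X.c 4 3 4 = (X.n 3 : ℤ) := by
    linarith [e2, hxy]
  -- the integer form of condition (iv)
  have ZIFF : ((X.c 4 3 3 : ℤ) = X.c 4 3 4) ↔
      ((X.c 4 3 4 : ℤ) * ((X.n 3 : ℤ) + X.n 4)^2
        = (X.n 3 : ℤ) * X.n 4 * (((X.n 3 : ℤ) + X.n 4) - ((1:ℤ) + X.n 1 + X.n 2))) := by
    constructor
    · intro hde
      linear_combination (((X.n 3 : ℤ) + X.n 4) * (X.n 4 : ℤ)) * A2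
        - ((X.n 3 : ℤ) + X.n 4) * e7 - (((X.n 3 : ℤ) + X.n 4) * (X.n 3 : ℤ)) * hde
        - (X.n 4 : ℤ) * h5
    · intro hQ
      have step1 : ((X.n 3 : ℤ) + X.n 4) *
          ((X.c 4 3 4 : ℤ) * ((X.n 3 : ℤ) + X.n 4)
            - (X.n 4 : ℤ) * ((X.n 3 : ℤ) - ((1:ℤ) + X.c 1 3 3 + X.c 2 3 3))) = 0 := by
        linear_combination hQ + (X.n 4 : ℤ) * h5
      have step2 : (X.c 4 3 4 : ℤ) * ((X.n 3 : ℤ) + X.n 4)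
          - (X.n 4 : ℤ) * ((X.n 3 : ℤ) - ((1:ℤ) + X.c 1 3 3 + X.c 2 3 3)) = 0 := by
        rcases mul_eq_zero.1 step1 with h | h
        · exfalso; linarith
        · exact h
      have hem : (X.c 4 3 4 : ℤ) * X.n 3 = (X.c 3 3 4 : ℤ) * X.n 4 := by
        linear_combination step2 - (X.n 4 : ℤ) * A2
      have hdm : (X.c 4 3 3 : ℤ) * X.n 3 = (X.c 4 3 4 : ℤ) * X.n 3 := by
        linear_combination -e7 - hem
      have := mul_right_cancel₀ (b := (X.n 3 : ℤ)) (by intro h0; rw [h0] at hn3; norm_num at hn3) hdm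
      exact this
  refine ⟨?_, ?_, ?_⟩
  · constructor
    · intro h
      have hab : (X.c 3 3 3 : ℤ) = X.c 3 3 4 := by exact_mod_cast h
      have : (X.c 4 3 3 : ℤ) = X.c 4 3 4 := by linarith [key1]
      exact_mod_cast this
    · intro h
      have hde : (X.c 4 3 3 : ℤ) = X.c 4 3 4 := by exact_mod_cast h
      have : (X.c 3 3 3 : ℤ) = X.c 3 3 4 := by linarith [key1]
      exact_mod_cast this
  · constructor
    · intro h
      have hab : (X.c 3 3 3 : ℤ) = X.c 3 3 4 := by exact_mod_cast h
      have : (X.c 4 4 3 : ℤ) = X.c 4 4 4 := by linarith [key1, key2]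
      exact_mod_cast this
    · intro h
      have hfg : (X.c 4 4 3 : ℤ) = X.c 4 4 4 := by exact_mod_cast h
      have : (X.c 3 3 3 : ℤ) = X.c 3 3 4 := by linarith [key1, key2]
      exact_mod_cast this
  · -- condition (iv)
    have hm1 : (1:ℚ) ≤ (X.n 3 : ℚ) := by exact_mod_cast X.n_pos 3
    have hp1 : (1:ℚ) ≤ (X.n 4 : ℚ) := by exact_mod_cast X.n_pos 4
    have hA : ((X.n 1 : ℚ) + 1) ≠ 0 := by positivity
    have hS : ((X.n 3 : ℚ) + (X.n 4 : ℚ)) ≠ 0 := by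
      have h1 : (0:ℚ) ≤ (X.n 4 : ℚ) := by positivity
      intro h0; linarith
    have hval : ε * γ * (α - γ) / α
        = ((X.n 3 : ℚ) * X.n 4 * (((X.n 3 : ℚ) + X.n 4) - (1 + (X.n 1 : ℚ) + X.n 2)))
            / (((X.n 3 : ℚ) + X.n 4)^2) := by
      rw [hε, hδ, hγ, hβ, hα]
      field_simp
      ring
    rw [hτ, hval]
    rw [eq_div_iff (by positivity : (((X.n 3 : ℚ) + X.n 4)^2) ≠ 0)]
    constructor
    · intro h
      have hab : (X.c 3 3 3 : ℤ) = X.c 3 3 4 := by exact_mod_cast h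
      have hde : (X.c 4 3 3 : ℤ) = X.c 4 3 4 := by linarith [key1]
      have hZ := ZIFF.1 hde
      exact_mod_cast hZ
    · intro h
      have hZ : (X.c 4 3 4 : ℤ) * ((X.n 3 : ℤ) + X.n 4)^2
          = (X.n 3 : ℤ) * X.n 4 * (((X.n 3 : ℤ) + X.n 4) - ((1:ℤ) + X.n 1 + X.n 2)) := by
        exact_mod_cast h
      have hde := ZIFF.2 hZ
      have : (X.c 3 3 3 : ℤ) = X.c 3 3 4 := by linarith [key1]
      exact_mod_cast this
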